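/- Let F be a field and let D be a (not necessarily associative) unital division algebra of dimension 2 over F, where F is contained in the center/nucleus of D (i.e., D is a 2-dimensional semifield over its center F). If F is finite, then D is associative and commutative, hence a field isomorphic to the quadratic extension F_{q²} of F = F_q. -/

import Mathlib

/-- Dickson's theorem: a (not necessarily associative) unital division algebra
`D` of dimension `2` over a finite field `F` contained in its center is
associative and commutative, hence a field isomorphic to `F_{q²}`. -/
theorem stmt5 (F D : Type*) [Field F] [Fintype F]
    [NonAssocRing D] [Nontrivial D] [Module F D]
    -- `F` lies in the center/nucleus of `D`: scalars commute with products
    (hcl : ∀ (c : F) (x y : D), (c • x) * y = c • (x * y))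
    (hcr : ∀ (c : F) (x y : D), x * (c • y) = c • (x * y))
    -- `D` is a division algebra: no zero divisors
    (hdiv : ∀ x y : D, x * y = 0 → x = 0 ∨ y = 0)
    -- `D` is 2-dimensional over `F`
    (hdim : Module.finrank F D = 2)
    (p n : ℕ) [Fact p.Prime] (hcard : Fintype.card F = p ^ n) :
    (∀ x y z : D, x * y * z = x * (y * z)) ∧ (∀ x y : D, x * y = y * x) ∧
      Nonempty (D ≃+* GaloisField p (2 * n)) := by
  have h1 : (1 : D) ≠ 0 := one_ne_zero
  -- find `a` with `{1, a}` a basis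
  have hne : Submodule.span F ({1} : Set D) ≠ ⊤ := by
    intro h
    have : Module.finrank F D = 1 := by
      rw [← finrank_span_singleton (K := F) h1, h, finrank_top]
    omega
  obtain ⟨a, ha⟩ := not_forall.mp (mt Submodule.eq_top_iff'.mpr hne)
  have li : LinearIndependent F ![(1 : D), a] := by
    rw [LinearIndependent.pair_iff' h1]
    intro c hc
    exact ha (hc ▸ Submodule.smul_mem _ c (Submodule.mem_span_singleton_self 1))
  haveI : FiniteDimensional F D := FiniteDimensional.of_finrank_eq_succ hdim
  let B : Module.Basis (Fin 2) F D :=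
    basisOfLinearIndependentOfCardEqFinrank li (by simp [hdim])
  have hB : ∀ i, B i = ![(1 : D), a] i := fun i => by
    rw [coe_basisOfLinearIndependentOfCardEqFinrank]
  have hrep : ∀ x : D, ∃ c d : F, x = c • (1 : D) + d • a := by
    intro x
    refine ⟨B.repr x 0, B.repr x 1, ?_⟩
    have h := B.sum_repr x
    rw [Fin.sum_univ_two, hB 0, hB 1] at h
    simpa using h.symm
  obtain ⟨e, f, hef⟩ := hrep (a * a)
  have hmul : ∀ c d c' d' : F, (c • (1 : D) + d • a) * (c' • (1 : D) + d' • a) =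
      (c * c' + d * d' * e) • (1 : D) + (c * d' + d * c' + d * d' * f) • a := by
    intro c d c' d'
    simp only [add_mul, mul_add, hcl, hcr, one_mul, mul_one, hef, smul_add, smul_smul]
    module
  have hassoc : ∀ x y z : D, x * y * z = x * (y * z) := by
    intro x y z
    obtain ⟨c1, d1, rfl⟩ := hrep x
    obtain ⟨c2, d2, rfl⟩ := hrep y
    obtain ⟨c3, d3, rfl⟩ := hrep z
    rw [hmul, hmul, hmul, hmul]
    module
  have hcomm : ∀ x y : D, x * y = y * x := by
    intro x y
    obtain ⟨c1, d1, rfl⟩ := hrep x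
    obtain ⟨c2, d2, rfl⟩ := hrep y
    rw [hmul, hmul]
    module
  haveI : Finite D := Module.finite_of_finite F
  haveI : Fintype D := Fintype.ofFinite D
  have hcardD : Fintype.card D = p ^ (2 * n) := by
    rw [Module.card_eq_pow_finrank (K := F) (V := D), hdim, hcard, ← pow_mul, mul_comm n 2]
  have hn : n ≠ 0 := by
    intro h
    have := Fintype.one_lt_card (α := F)
    rw [hcard, h, pow_zero] at this
    omega
  refine ⟨hassoc, hcomm, ?_⟩
  letI : CommRing D :=
    { ‹NonAssocRing D› with mul_assoc := hassoc, mul_comm := hcomm }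
  haveI : NoZeroDivisors D := ⟨fun {x y} h => hdiv x y h⟩
  haveI : IsDomain D := NoZeroDivisors.to_isDomain D
  letI := Classical.decEq D
  letI : Field D := Fintype.fieldOfDomain D
  have hp' : p.Prime := Fact.out
  have hchar : ringChar D = p := by
    have hdvd : p ∣ ringChar D := (prime_dvd_char_iff_dvd_card p).mpr
      (hcardD ▸ dvd_pow_self p (by omega : 2 * n ≠ 0))
    have : (ringChar D).Prime := CharP.char_is_prime D (ringChar D)
    exact ((Nat.prime_dvd_prime_iff_eq hp' this).mp hdvd).symm
  haveI : CharP D p := ringChar.of_eq hchar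
  letI : Algebra (ZMod p) D := ZMod.algebra D p
  exact ⟨(GaloisField.algEquivGaloisFieldOfFintype p (2 * n) hcardD).toRingEquiv⟩
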